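/- Let σ be analytic and nonvanishing on the sector S = {z : |arg z| < α}, positive on (0,∞), with ∫_0^∞ x^n |σ(e^{iθ}x)|² dx < ∞ for all n ≥ 0 and |θ| < α. Suppose |σ(e^{iθ}r)| ≥ c_θ σ(s_θ r) for all r > 0, where c_θ > 0 and 0 < s_θ < 1. Let p_n be the orthonormal polynomials (with positive leading coefficient) for the weight σ² on (0,∞). Then for z = r e^{iθ}, N_{n,z} = |z| ∫_0^∞ |p_n(zx) σ(zx)|² dx ≥ c_θ² s_θ^{-(2n+1)}. -/

import Mathlib

open MeasureTheory Polynomial Real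

lemma span_lemma (p : ℕ → Polynomial ℝ) (hdeg : ∀ n, (p n).natDegree = n)
    (hlead : ∀ n, 0 < (p n).leadingCoeff) :
    ∀ (m : ℕ) (Q : Polynomial ℂ), (∀ j, m ≤ j → Q.coeff j = 0) →
      ∃ d : ℕ → ℂ,
        Q = ∑ k ∈ Finset.range m, Polynomial.C (d k) * ((p k).map (algebraMap ℝ ℂ)) := by
  intro m
  induction m with
  | zero =>
    intro Q hQ
    refine ⟨0, ?_⟩
    simp only [Finset.range_zero, Finset.sum_empty]
    ext j
    simp [hQ j (Nat.zero_le j)]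
  | succ m ih =>
    intro Q hQ
    have hLne : ((p m).leadingCoeff : ℂ) ≠ 0 := by
      exact_mod_cast (ne_of_gt (hlead m))
    set a : ℂ := Q.coeff m / ((p m).leadingCoeff : ℂ) with ha
    set Q' : Polynomial ℂ := Q - Polynomial.C a * ((p m).map (algebraMap ℝ ℂ)) with hQ'
    have hcm : ((p m).map (algebraMap ℝ ℂ)).coeff m = ((p m).leadingCoeff : ℂ) := by
      rw [Polynomial.coeff_map, Polynomial.leadingCoeff, hdeg m]
      rfl
    have hQ'c : ∀ j, m ≤ j → Q'.coeff j = 0 := by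
      intro j hj
      rcases eq_or_lt_of_le hj with h | h
      · subst h
        simp [hQ', Polynomial.coeff_sub, Polynomial.coeff_C_mul, hcm, ha,
          div_mul_cancel₀ _ hLne]
      · have h1 : Q.coeff j = 0 := hQ j h
        have h2 : ((p m).map (algebraMap ℝ ℂ)).coeff j = 0 := by
          rw [Polynomial.coeff_map]
          rw [Polynomial.coeff_eq_zero_of_natDegree_lt (by rw [hdeg m]; exact h)]
          simp
        simp [hQ', Polynomial.coeff_sub, Polynomial.coeff_C_mul, h1, h2]
    obtain ⟨d, hd⟩ := ih Q' hQ'c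
    refine ⟨fun k => if k = m then a else d k, ?_⟩
    rw [Finset.sum_range_succ]
    have : ∑ k ∈ Finset.range m, Polynomial.C (if k = m then a else d k) * ((p k).map (algebraMap ℝ ℂ))
        = ∑ k ∈ Finset.range m, Polynomial.C (d k) * ((p k).map (algebraMap ℝ ℂ)) := by
      apply Finset.sum_congr rfl
      intro k hk
      rw [if_neg (Finset.mem_range.mp hk).ne]
    rw [this, ← hd]
    simp only [if_pos rfl, hQ']
    ring_nf
    simp [if_pos trivial]
    ring

lemma expand_lemma (p : ℕ → Polynomial ℝ) (hdeg : ∀ n, (p n).natDegree = n)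
    (hlead : ∀ n, 0 < (p n).leadingCoeff) (n : ℕ) (l : ℂ) :
    ∃ c : ℕ → ℂ, c n = l ^ n ∧ ∀ u : ℝ,
      (Polynomial.aeval (l * u) (p n) : ℂ)
        = ∑ k ∈ Finset.range (n + 1), c k * (((p k).eval u : ℝ) : ℂ) := by
  classical
  set q : Polynomial ℂ := (p n).map (algebraMap ℝ ℂ) with hq
  set Q : Polynomial ℂ :=
    ∑ i ∈ Finset.range n, Polynomial.C ((l ^ i - l ^ n) * q.coeff i) * Polynomial.X ^ i with hQdef
  have hQc : ∀ j, n ≤ j → Q.coeff j = 0 := by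
    intro j hj
    rw [hQdef, Polynomial.finset_sum_coeff]
    apply Finset.sum_eq_zero
    intro i hi
    rw [Polynomial.coeff_C_mul, Polynomial.coeff_X_pow, if_neg]
    · ring
    · have := Finset.mem_range.mp hi
      omega
  obtain ⟨d, hd⟩ := span_lemma p hdeg hlead n Q hQc
  refine ⟨fun k => if k = n then l ^ n else d k, by simp, ?_⟩
  intro u
  have hqdeg : q.natDegree = n := by
    rw [hq, Polynomial.natDegree_map_eq_of_injective (algebraMap ℝ ℂ).injective, hdeg]
  -- aeval (l*u) (p n) = q.eval (l*u)
  have he1 : (Polynomial.aeval (l * (u:ℂ)) (p n) : ℂ) = q.eval (l * u) := by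
    rw [hq, Polynomial.eval_map, Polynomial.aeval_def]
  have hek : ∀ k, (((p k).map (algebraMap ℝ ℂ)).eval (u:ℂ)) = (((p k).eval u : ℝ) : ℂ) := by
    intro k
    rw [Polynomial.eval_map]
    exact Polynomial.eval₂_at_apply (algebraMap ℝ ℂ) u
  -- key polynomial-evaluation identity
  have hkey : q.eval (l * (u:ℂ)) = l ^ n * q.eval (u:ℂ) + Q.eval (u:ℂ) := by
    rw [Polynomial.eval_eq_sum_range (x := l * (u:ℂ)), Polynomial.eval_eq_sum_range (x := (u:ℂ)),
      hqdeg]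
    have hQev : Q.eval (u:ℂ) = ∑ i ∈ Finset.range n, (l ^ i - l ^ n) * q.coeff i * u ^ i := by
      rw [hQdef, Polynomial.eval_finset_sum]
      simp
    rw [hQev, Finset.sum_range_succ, Finset.sum_range_succ]
    have hterm : ∑ x ∈ Finset.range n, q.coeff x * (l * (u:ℂ)) ^ x
        = (∑ x ∈ Finset.range n, l ^ n * (q.coeff x * (u:ℂ) ^ x))
          + ∑ x ∈ Finset.range n, (l ^ x - l ^ n) * q.coeff x * (u:ℂ) ^ x := by
      rw [← Finset.sum_add_distrib]
      apply Finset.sum_congr rfl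
      intro x _
      rw [mul_pow]; ring
    rw [hterm, mul_add, Finset.mul_sum]
    ring
  rw [he1, hkey, hd, Polynomial.eval_finset_sum, Finset.sum_range_succ]
  simp only [Polynomial.eval_mul, Polynomial.eval_C, hek, if_true]
  have : ∀ k ∈ Finset.range n,
      (if k = n then l ^ n else d k) * (((p k).eval u : ℝ) : ℂ)
        = d k * (((p k).eval u : ℝ) : ℂ) := by
    intro k hk
    rw [if_neg (Finset.mem_range.mp hk).ne]
  rw [Finset.sum_congr rfl this]
  rw [hq, hek]
  ring

lemma intV (A : ℝ → ℝ)
    (hintA : ∀ n : ℕ, IntegrableOn (fun x : ℝ => x ^ n * A x) (Set.Ioi (0:ℝ)))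
    (r' : ℝ) (hr' : 0 < r') (V : Polynomial ℝ) :
    IntegrableOn (fun x : ℝ => V.eval x * A (r' * x)) (Set.Ioi (0:ℝ)) := by
  have hAi : ∀ i : ℕ, IntegrableOn (fun x : ℝ => x ^ i * A (r' * x)) (Set.Ioi 0) := by
    intro i
    have h1 : IntegrableOn (fun x : ℝ => (r' * x) ^ i * A (r' * x)) (Set.Ioi 0) := by
      have h2 := (MeasureTheory.integrableOn_Ioi_comp_mul_left_iff
        (fun t : ℝ => t ^ i * A t) 0 hr').mpr
      rw [mul_zero] at h2
      exact h2 (hintA i)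
    have h2 := h1.const_mul ((r' ^ i)⁻¹)
    apply MeasureTheory.IntegrableOn.congr_fun h2 ?_ measurableSet_Ioi
    intro x _
    simp only
    rw [mul_pow]
    field_simp
  have heq : ∀ x : ℝ, V.eval x * A (r' * x)
      = ∑ i ∈ Finset.range (V.natDegree + 1), V.coeff i * (x ^ i * A (r' * x)) := by
    intro x
    rw [Polynomial.eval_eq_sum_range, Finset.sum_mul]
    exact Finset.sum_congr rfl fun i _ => by ring
  have hsum : IntegrableOn
      (fun x : ℝ => ∑ i ∈ Finset.range (V.natDegree + 1), V.coeff i * (x ^ i * A (r' * x)))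
      (Set.Ioi 0) :=
    integrable_finset_sum _ fun i _ => (hAi i).const_mul _
  exact MeasureTheory.IntegrableOn.congr_fun hsum (fun x _ => (heq x).symm) measurableSet_Ioi

lemma orth2 (σ : ℂ → ℂ) (p : ℕ → Polynomial ℝ)
    (horth : ∀ m n,
      (∫ x in Set.Ioi (0 : ℝ), (p m).eval x * (p n).eval x * ((σ x).re) ^ 2) =
        if m = n then 1 else 0)
    (hbase : ∀ V : Polynomial ℝ,
      IntegrableOn (fun x : ℝ => V.eval x * ((σ x).re) ^ 2) (Set.Ioi (0:ℝ)))
    (m : ℕ) (a : ℕ → ℝ) :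
    (∫ x in Set.Ioi (0:ℝ), (∑ k ∈ Finset.range m, a k * (p k).eval x) ^ 2 * ((σ x).re) ^ 2)
      = ∑ k ∈ Finset.range m, (a k) ^ 2 := by
  have hterm : ∀ k j : ℕ, IntegrableOn
      (fun x : ℝ => a k * a j * ((p k).eval x * (p j).eval x * ((σ x).re) ^ 2))
      (Set.Ioi (0:ℝ)) := by
    intro k j
    have h := (hbase (p k * p j)).const_mul (a k * a j)
    apply MeasureTheory.IntegrableOn.congr_fun h ?_ measurableSet_Ioi
    intro x _
    simp only [Polynomial.eval_mul]
  have hexp : ∀ x : ℝ, (∑ k ∈ Finset.range m, a k * (p k).eval x) ^ 2 * ((σ x).re) ^ 2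
      = ∑ k ∈ Finset.range m, ∑ j ∈ Finset.range m,
          a k * a j * ((p k).eval x * (p j).eval x * ((σ x).re) ^ 2) := by
    intro x
    rw [sq, Finset.sum_mul_sum, Finset.sum_mul]
    rw [Finset.sum_congr rfl (fun k _ => Finset.sum_mul (Finset.range m) _ _)]
    exact Finset.sum_congr rfl fun k _ => Finset.sum_congr rfl fun j _ => by ring
  rw [MeasureTheory.setIntegral_congr_fun measurableSet_Ioi fun x _ => hexp x]
  rw [MeasureTheory.integral_finset_sum _ fun k _ => integrable_finset_sum _ fun j _ => hterm k j]
  have : ∀ k ∈ Finset.range m,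
      (∫ x in Set.Ioi (0:ℝ), ∑ j ∈ Finset.range m,
        a k * a j * ((p k).eval x * (p j).eval x * ((σ x).re) ^ 2))
      = (a k) ^ 2 := by
    intro k hk
    rw [MeasureTheory.integral_finset_sum _ fun j _ => hterm k j]
    have : ∀ j ∈ Finset.range m,
        (∫ x in Set.Ioi (0:ℝ), a k * a j * ((p k).eval x * (p j).eval x * ((σ x).re) ^ 2))
        = a k * a j * (if k = j then 1 else 0) := by
      intro j _
      rw [MeasureTheory.integral_const_mul, horth k j]
    rw [Finset.sum_congr rfl this]
    simp only [mul_ite, mul_one, mul_zero]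
    rw [Finset.sum_ite_eq (Finset.range m) k fun j => a k * a j]
    rw [if_pos hk]
    ring
  rw [Finset.sum_congr rfl this]

lemma complex_orth (σ : ℂ → ℂ) (p : ℕ → Polynomial ℝ)
    (horth : ∀ m n,
      (∫ x in Set.Ioi (0 : ℝ), (p m).eval x * (p n).eval x * ((σ x).re) ^ 2) =
        if m = n then 1 else 0)
    (hbase : ∀ V : Polynomial ℝ,
      IntegrableOn (fun x : ℝ => V.eval x * ((σ x).re) ^ 2) (Set.Ioi (0:ℝ)))
    (m : ℕ) (cc : ℕ → ℂ) :
    (∫ x in Set.Ioi (0:ℝ),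
        ‖∑ k ∈ Finset.range m, cc k * (((p k).eval x : ℝ) : ℂ)‖ ^ 2 * ((σ x).re) ^ 2)
      = ∑ k ∈ Finset.range m, ‖cc k‖ ^ 2 := by
  have hre : ∀ x : ℝ, (∑ k ∈ Finset.range m, cc k * (((p k).eval x : ℝ) : ℂ)).re
      = ∑ k ∈ Finset.range m, (cc k).re * (p k).eval x := by
    intro x
    rw [Complex.re_sum]
    exact Finset.sum_congr rfl fun k _ => by simp [Complex.mul_re]
  have him : ∀ x : ℝ, (∑ k ∈ Finset.range m, cc k * (((p k).eval x : ℝ) : ℂ)).im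
      = ∑ k ∈ Finset.range m, (cc k).im * (p k).eval x := by
    intro x
    rw [Complex.im_sum]
    exact Finset.sum_congr rfl fun k _ => by simp [Complex.mul_im]
  have hsq : ∀ x : ℝ,
      ‖∑ k ∈ Finset.range m, cc k * (((p k).eval x : ℝ) : ℂ)‖ ^ 2 * ((σ x).re) ^ 2
      = (∑ k ∈ Finset.range m, (cc k).re * (p k).eval x) ^ 2 * ((σ x).re) ^ 2
        + (∑ k ∈ Finset.range m, (cc k).im * (p k).eval x) ^ 2 * ((σ x).re) ^ 2 := by
    intro x
    rw [Complex.sq_norm, Complex.normSq_apply, hre, him]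
    ring
  have hint2 : ∀ b : ℕ → ℝ, IntegrableOn
      (fun x : ℝ => (∑ k ∈ Finset.range m, b k * (p k).eval x) ^ 2 * ((σ x).re) ^ 2)
      (Set.Ioi (0:ℝ)) := by
    intro b
    have h := hbase ((∑ k ∈ Finset.range m, Polynomial.C (b k) * p k) ^ 2)
    apply MeasureTheory.IntegrableOn.congr_fun h ?_ measurableSet_Ioi
    intro x _
    simp [Polynomial.eval_finset_sum]
  rw [MeasureTheory.setIntegral_congr_fun measurableSet_Ioi fun x _ => hsq x]
  rw [MeasureTheory.integral_add (hint2 _) (hint2 _)]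
  rw [orth2 σ p horth hbase m _, orth2 σ p horth hbase m _]
  rw [← Finset.sum_add_distrib]
  exact Finset.sum_congr rfl fun k _ => by
    rw [Complex.sq_norm, Complex.normSq_apply]; ring


/-- Main lower bound: for a weight `σ` analytic on the sector `|arg z| < α`,
positive on `(0,∞)`, satisfying `|σ(e^{iθ}r)| ≥ c_θ σ(s_θ r)`, the rotated
orthonormal polynomials satisfy `N_{n,z} ≥ c_θ² s_θ^{-(2n+1)}`. -/
theorem main_lower_bound
    (σ : ℂ → ℂ) (α : ℝ) (hα : 0 < α)
    (hanal : AnalyticOn ℂ σ {z : ℂ | z ≠ 0 ∧ |Complex.arg z| < α})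
    (hreal : ∀ x : ℝ, 0 < x → (σ x).im = 0 ∧ 0 < (σ x).re)
    (hint : ∀ (n : ℕ) (θ : ℝ), |θ| < α →
      IntegrableOn
        (fun x : ℝ => x ^ n * ‖σ (Complex.exp (θ * Complex.I) * x)‖ ^ 2)
        (Set.Ioi (0 : ℝ)))
    (p : ℕ → Polynomial ℝ)
    (hdeg : ∀ n, (p n).natDegree = n)
    (hlead : ∀ n, 0 < (p n).leadingCoeff)
    (horth : ∀ m n,
      (∫ x in Set.Ioi (0 : ℝ), (p m).eval x * (p n).eval x * ((σ x).re) ^ 2) =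
        if m = n then 1 else 0)
    (θ : ℝ) (hθ : |θ| < α) (c s : ℝ) (hc : 0 < c) (hs0 : 0 < s) (hs1 : s < 1)
    (hbasic : ∀ r : ℝ, 0 < r →
      c * (σ (s * r)).re ≤ ‖σ (Complex.exp (θ * Complex.I) * r)‖)
    (r : ℝ) (hr : 0 < r) (n : ℕ) :
    c ^ 2 * s ^ (-(2 * (n : ℤ) + 1)) ≤
      ‖(r : ℂ) * Complex.exp (θ * Complex.I)‖ *
        ∫ x in Set.Ioi (0 : ℝ),
          ‖Polynomial.aeval ((r : ℂ) * Complex.exp (θ * Complex.I) * x) (p n) *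
                σ ((r : ℂ) * Complex.exp (θ * Complex.I) * x)‖ ^ 2 := by
  classical
  set e : ℂ := Complex.exp (θ * Complex.I) with he
  have habs_e : ‖e‖ = 1 := by
    rw [he, Complex.norm_exp]
    simp
  set z : ℂ := (r : ℂ) * e with hz
  have habs_z : ‖z‖ = r := by
    rw [hz, norm_mul, habs_e, Complex.norm_real, Real.norm_eq_abs, abs_of_pos hr, mul_one]
  have hsne : s ≠ 0 := ne_of_gt hs0
  have hrne : r ≠ 0 := ne_of_gt hr
  -- pointwise |σ x|² = (σ x).re² for x > 0
  have habs_re : ∀ x : ℝ, 0 < x → ‖σ x‖ ^ 2 = ((σ x).re) ^ 2 := by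
    intro x hx
    obtain ⟨h1, _⟩ := hreal x hx
    rw [Complex.sq_norm, Complex.normSq_apply, h1]
    ring
  -- base integrability on the positive axis
  have hbase : ∀ V : Polynomial ℝ,
      IntegrableOn (fun x : ℝ => V.eval x * ((σ x).re) ^ 2) (Set.Ioi (0:ℝ)) := by
    intro V
    have h0 : ∀ i : ℕ, IntegrableOn
        (fun x : ℝ => x ^ i * ‖σ x‖ ^ 2) (Set.Ioi (0:ℝ)) := by
      intro i
      have h := hint i 0 (by simpa using hα)
      apply MeasureTheory.IntegrableOn.congr_fun h ?_ measurableSet_Ioi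
      intro x _
      norm_num
    have h1 := intV (fun x : ℝ => ‖σ x‖ ^ 2) h0 1 one_pos V
    apply MeasureTheory.IntegrableOn.congr_fun h1 ?_ measurableSet_Ioi
    intro x hx
    simp only [one_mul]
    rw [habs_re x hx]
  -- expansion coefficients for l = e / s
  set l : ℂ := e * ((s : ℂ))⁻¹ with hl
  have habs_l : ‖l‖ = s⁻¹ := by
    rw [hl, norm_mul, habs_e, norm_inv, Complex.norm_real, Real.norm_eq_abs, abs_of_pos hs0, one_mul]
  obtain ⟨cc, hccn, hccu⟩ := expand_lemma p hdeg hlead n l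
  set H : ℝ → ℝ := fun t =>
    ‖∑ k ∈ Finset.range (n+1), cc k * (((p k).eval t : ℝ) : ℂ)‖ ^ 2 * ((σ t).re) ^ 2
    with hH
  have hHval : (∫ x in Set.Ioi (0:ℝ), H x)
      = ∑ k ∈ Finset.range (n+1), ‖cc k‖ ^ 2 :=
    complex_orth σ p horth hbase (n+1) cc
  have hHlow : (s⁻¹) ^ (2*n) ≤ ∫ x in Set.Ioi (0:ℝ), H x := by
    rw [hHval]
    have hn : ‖cc n‖ ^ 2 = (s⁻¹) ^ (2*n) := by
      rw [hccn, norm_pow, habs_l, ← pow_mul, Nat.mul_comm]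
    rw [← hn]
    exact Finset.single_le_sum (f := fun k => ‖cc k‖ ^ 2)
      (fun i _ => sq_nonneg _) (Finset.self_mem_range_succ n)
  -- scaling
  have hscale : (∫ x in Set.Ioi (0:ℝ), H ((s*r) * x)) = (s*r)⁻¹ * ∫ x in Set.Ioi (0:ℝ), H x := by
    have h := MeasureTheory.integral_comp_mul_left_Ioi H 0 (mul_pos hs0 hr)
    rw [mul_zero] at h
    simpa [smul_eq_mul] using h
  -- G
  set G : ℝ → ℝ := fun x =>
    ‖Polynomial.aeval (z * x) (p n)‖ ^ 2 * ((σ ((s:ℂ) * ((r*x : ℝ) : ℂ))).re) ^ 2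
    with hG
  have hzx : ∀ x : ℝ, z * (x:ℂ) = e * ((r*x : ℝ) : ℂ) := by
    intro x
    rw [hz]
    push_cast
    ring
  have hGH : ∀ x : ℝ, G x = H ((s*r) * x) := by
    intro x
    have hsC : (s:ℂ) ≠ 0 := by exact_mod_cast hsne
    have h1 : l * (((s*r*x : ℝ)) : ℂ) = z * x := by
      rw [hl, hz]
      push_cast
      field_simp
    have h2 : ((s:ℂ) * ((r*x : ℝ) : ℂ)) = (((s*r*x : ℝ)) : ℂ) := by
      push_cast
      ring
    have h3 : (s*r) * x = s*r*x := rfl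
    simp only [hG, hH, h3, ← hccu (s*r*x), h1, h2]
  -- F
  set F : ℝ → ℝ := fun x =>
    ‖Polynomial.aeval (z * x) (p n) * σ (z * x)‖ ^ 2 with hF
  -- pointwise bound c² G ≤ F on Ioi 0
  have hpoint : ∀ x ∈ Set.Ioi (0:ℝ), c^2 * G x ≤ F x := by
    intro x hx
    have hxpos : (0:ℝ) < x := hx
    have hrx : 0 < r * x := mul_pos hr hxpos
    have h1 := hbasic (r*x) hrx
    have hrepos : 0 < (σ ((s:ℂ) * ((r*x : ℝ) : ℂ))).re := by
      have h2 : ((s:ℂ) * ((r*x : ℝ) : ℂ)) = (((s*(r*x) : ℝ)) : ℂ) := by push_cast; ring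
      rw [h2]
      exact (hreal (s*(r*x)) (mul_pos hs0 hrx)).2
    have h3 : (c * (σ ((s:ℂ) * ((r*x : ℝ) : ℂ))).re) ^ 2
        ≤ (‖σ (e * ((r*x : ℝ) : ℂ))‖) ^ 2 :=
      pow_le_pow_left₀ (le_of_lt (mul_pos hc hrepos)) h1 2
    have h4 : F x = ‖Polynomial.aeval (z * x) (p n)‖ ^ 2
        * ‖σ (e * ((r*x : ℝ) : ℂ))‖ ^ 2 := by
      rw [hF]
      simp only
      rw [norm_mul, mul_pow, hzx x]
    rw [h4, hG]
    simp only
    calc c^2 * (‖Polynomial.aeval (z * x) (p n)‖ ^ 2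
            * ((σ ((s:ℂ) * ((r*x : ℝ) : ℂ))).re) ^ 2)
        = ‖Polynomial.aeval (z * x) (p n)‖ ^ 2
            * (c * (σ ((s:ℂ) * ((r*x : ℝ) : ℂ))).re) ^ 2 := by ring
      _ ≤ ‖Polynomial.aeval (z * x) (p n)‖ ^ 2
            * ‖σ (e * ((r*x : ℝ) : ℂ))‖ ^ 2 :=
          mul_le_mul_of_nonneg_left h3 (sq_nonneg _)
  -- integrability of F
  have hFint : IntegrableOn F (Set.Ioi (0:ℝ)) := by
    have hAr : ∀ i : ℕ, IntegrableOn
        (fun t : ℝ => t ^ i * ‖σ (e * t)‖ ^ 2) (Set.Ioi (0:ℝ)) :=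
      fun i => hint i θ hθ
    set U : Polynomial ℝ :=
      ∑ i ∈ Finset.range (n+1), Polynomial.C (|(p n).coeff i| * r^i) * Polynomial.X ^ i with hU
    have hUint := intV (fun t : ℝ => ‖σ (e * t)‖ ^ 2) hAr r hr (U^2)
    have hσm : AEStronglyMeasurable (fun x : ℝ => ‖σ (e * ((r*x : ℝ) : ℂ))‖ ^ 2)
        (volume.restrict (Set.Ioi 0)) := by
      have h1 : IntegrableOn (fun x : ℝ => ‖σ (e * ((r*x : ℝ) : ℂ))‖ ^ 2)
          (Set.Ioi (0:ℝ)) := by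
        have h2 := (MeasureTheory.integrableOn_Ioi_comp_mul_left_iff
          (fun t : ℝ => ‖σ (e * t)‖ ^ 2) 0 hr).mpr
        rw [mul_zero] at h2
        exact h2 (by simpa using hAr 0)
      exact h1.aestronglyMeasurable
    have hPcont : Continuous fun x : ℝ => ‖Polynomial.aeval (z * (x:ℂ)) (p n)‖ ^ 2 := by
      apply Continuous.pow
      apply continuous_norm.comp
      exact (Polynomial.continuous_aeval (p n)).comp
        (continuous_const.mul Complex.continuous_ofReal)
    have hFm : AEStronglyMeasurable F (volume.restrict (Set.Ioi 0)) := by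
      have hFeq : F = fun x : ℝ => ‖Polynomial.aeval (z * (x:ℂ)) (p n)‖ ^ 2
          * ‖σ (e * ((r*x : ℝ) : ℂ))‖ ^ 2 := by
        funext x
        rw [hF]
        simp only
        rw [norm_mul, mul_pow, hzx x]
      rw [hFeq]
      exact (hPcont.aestronglyMeasurable.restrict).mul hσm
    have hUeval : ∀ x : ℝ, 0 < x →
        ‖Polynomial.aeval (z * (x:ℂ)) (p n)‖ ≤ U.eval x := by
      intro x hx
      have h1 : Polynomial.aeval (z * (x:ℂ)) (p n)
          = ∑ i ∈ Finset.range (n+1), (p n).coeff i • (z * (x:ℂ)) ^ i := by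
        rw [Polynomial.aeval_eq_sum_range, hdeg n]
      rw [h1]
      refine le_trans (norm_sum_le _ _) ?_
      have h2 : U.eval x = ∑ i ∈ Finset.range (n+1), |(p n).coeff i| * r^i * x^i := by
        rw [hU]
        simp [Polynomial.eval_finset_sum]
      rw [h2]
      apply Finset.sum_le_sum
      intro i _
      have heval : ‖(p n).coeff i • (z * (x:ℂ)) ^ i‖
          = |(p n).coeff i| * r ^ i * x ^ i := by
        rw [Complex.real_smul, norm_mul, norm_pow, norm_mul, habs_z, Complex.norm_real,
          Complex.norm_real, Real.norm_eq_abs, Real.norm_eq_abs, abs_of_pos hx, mul_pow]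
        ring
      exact le_of_eq heval
    apply MeasureTheory.Integrable.mono' hUint hFm
    rw [MeasureTheory.ae_restrict_iff' measurableSet_Ioi]
    apply MeasureTheory.ae_of_all
    intro x hx
    have hxpos : (0:ℝ) < x := hx
    have hFeq2 : F x = ‖Polynomial.aeval (z * (x:ℂ)) (p n)‖ ^ 2
        * ‖σ (e * ((r*x : ℝ) : ℂ))‖ ^ 2 := by
      rw [hF]
      simp only
      rw [norm_mul, mul_pow, hzx x]
    have hFnn : 0 ≤ F x := by
      rw [hFeq2]; positivity
    rw [Real.norm_eq_abs, abs_of_nonneg hFnn, hFeq2]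
    have h5 : (U^2).eval x = (U.eval x)^2 := by rw [Polynomial.eval_pow]
    show _ ≤ (U^2).eval x * ‖σ (e * ((r*x : ℝ) : ℂ))‖ ^ 2
    rw [h5]
    apply mul_le_mul_of_nonneg_right _ (sq_nonneg _)
    exact pow_le_pow_left₀ (norm_nonneg _) (hUeval x hxpos) 2
  -- integral identity for c² G
  have hGint_eq : (∫ x in Set.Ioi (0:ℝ), c^2 * G x)
      = c^2 * ((s*r)⁻¹ * ∫ x in Set.Ioi (0:ℝ), H x) := by
    rw [MeasureTheory.integral_const_mul]
    congr 1
    have h1 : (∫ x in Set.Ioi (0:ℝ), G x) = ∫ x in Set.Ioi (0:ℝ), H ((s*r) * x) := by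
      congr 1
      funext x
      exact hGH x
    rw [h1, hscale]
  have hmono : (∫ x in Set.Ioi (0:ℝ), c^2 * G x) ≤ ∫ x in Set.Ioi (0:ℝ), F x := by
    apply MeasureTheory.integral_mono_of_nonneg
    · exact MeasureTheory.ae_of_all _ fun x =>
        mul_nonneg (sq_nonneg c) (mul_nonneg (sq_nonneg _) (sq_nonneg _))
    · exact hFint
    · exact (MeasureTheory.ae_restrict_iff' measurableSet_Ioi).mpr
        (MeasureTheory.ae_of_all _ hpoint)
  -- final computation
  have hzp : s ^ (-(2 * (n : ℤ) + 1)) = (s⁻¹) ^ (2*n+1) := by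
    have h1 : (-(2 * (n:ℤ) + 1)) = -((2*n+1 : ℕ) : ℤ) := by push_cast; ring
    rw [h1, zpow_neg, zpow_natCast, inv_pow]
  calc c ^ 2 * s ^ (-(2 * (n : ℤ) + 1))
      = r * (c^2 * ((s*r)⁻¹ * (s⁻¹)^(2*n))) := by
        rw [hzp, pow_succ, inv_pow, inv_pow]
        field_simp
        ring
    _ ≤ r * (c^2 * ((s*r)⁻¹ * ∫ x in Set.Ioi (0:ℝ), H x)) := by
        gcongr
    _ = r * ∫ x in Set.Ioi (0:ℝ), c^2 * G x := by rw [hGint_eq]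
    _ ≤ r * ∫ x in Set.Ioi (0:ℝ), F x := by
        exact mul_le_mul_of_nonneg_left hmono (le_of_lt hr)
    _ = ‖z‖ * ∫ x in Set.Ioi (0:ℝ), F x := by rw [habs_z]
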